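/- Let X be a family of continuous functions f : Ω → ℝ on a topological space Ω and let σ(X) be the smallest σ-algebra on Ω making all f ∈ X measurable. Then every finite measure μ on σ(X) is closed regular, i.e. μ(A) = sup{μ(B) : B ∈ σ(X), B closed, B ⊆ A} for all A ∈ σ(X). -/

import Mathlib

open MeasureTheory Filter Topology Set ENNReal

/-- The σ-algebra σ(X) generated by a family X of real-valued functions on Ω. -/
def sigmaGen {Ω : Type*} (X : Set (Ω → ℝ)) : MeasurableSpace Ω :=
  ⨆ f ∈ X, MeasurableSpace.comap f inferInstance

section Aux

variable {Ω : Type*} [TopologicalSpace Ω] (X : Set (Ω → ℝ))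

/-- The key approximation property: `A` can be approximated from inside by closed
measurable sets. -/
def GoodSet (μ : @Measure Ω (sigmaGen X)) (A : Set Ω) : Prop :=
  ∀ ε : ℝ≥0∞, ε ≠ 0 →
    ∃ F : Set Ω, MeasurableSet[sigmaGen X] F ∧ IsClosed F ∧ F ⊆ A ∧ μ (A \ F) ≤ ε

theorem goodSet_preimage (hXcont : ∀ f ∈ X, Continuous f)
    (μ : @Measure Ω (sigmaGen X)) [IsFiniteMeasure μ] {f : Ω → ℝ} (hf : f ∈ X)
    {t : Set ℝ} (ht : MeasurableSet t) : GoodSet X μ (f ⁻¹' t) := by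
  letI : MeasurableSpace Ω := sigmaGen X
  have hfmeas : Measurable f := by
    rw [measurable_iff_comap_le]
    show MeasurableSpace.comap f inferInstance ≤ sigmaGen X
    rw [sigmaGen]
    exact le_iSup₂ (f := fun f _ => MeasurableSpace.comap f inferInstance) f hf
  intro ε hε
  set ν : Measure ℝ := μ.map f with hν
  have : IsFiniteMeasure ν := by
    constructor
    rw [hν, Measure.map_apply hfmeas MeasurableSet.univ]
    exact measure_lt_top μ _
  obtain ⟨C, hCt, hCclosed, hCμ⟩ :=
    ht.exists_isClosed_diff_lt (μ := ν) (measure_ne_top ν t) hε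
  refine ⟨f ⁻¹' C, hfmeas hCclosed.measurableSet,
    hCclosed.preimage (hXcont f hf), preimage_mono hCt, ?_⟩
  have heq : f ⁻¹' t \ f ⁻¹' C = f ⁻¹' (t \ C) := rfl
  rw [heq, ← Measure.map_apply hfmeas (ht.diff hCclosed.measurableSet)]
  exact hCμ.le

theorem goodSet_of_measurable (hXcont : ∀ f ∈ X, Continuous f)
    (μ : @Measure Ω (sigmaGen X)) [IsFiniteMeasure μ] :
    ∀ A : Set Ω, MeasurableSet[sigmaGen X] A → GoodSet X μ A := by
  -- the collection of sets A such that both A and Aᶜ are good is a σ-algebra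
  let M : MeasurableSpace Ω :=
    { MeasurableSet' := fun A => GoodSet X μ A ∧ GoodSet X μ Aᶜ
      measurableSet_empty := by
        constructor
        · intro ε hε
          exact ⟨∅, @MeasurableSet.empty Ω (sigmaGen X), isClosed_empty, Subset.rfl, by simp⟩
        · intro ε hε
          refine ⟨univ, @MeasurableSet.univ Ω (sigmaGen X), isClosed_univ, by simp, by simp⟩
      measurableSet_compl := by
        rintro A ⟨h1, h2⟩
        exact ⟨h2, by rwa [compl_compl]⟩
      measurableSet_iUnion := by
        rintro A hA
        constructor
        · -- inner approximation of a countable union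
          intro ε hε
          rcases eq_or_ne ε ∞ with rfl | hεtop
          · exact ⟨∅, @MeasurableSet.empty Ω (sigmaGen X), isClosed_empty, empty_subset _, le_top⟩
          have hε2 : ε / 2 ≠ 0 := by
            simpa using (ENNReal.half_pos hε).ne'
          obtain ⟨δ, δpos, hδsum⟩ := ENNReal.exists_pos_sum_of_countable' hε2 ℕ
          choose F hFmeas hFclosed hFsub hFμ using fun n => (hA n).1 (δ n) (δpos n).ne'
          -- the union of the F n approximates the union of the A n
          have hsub1 : (⋃ n, A n) \ (⋃ n, F n) ⊆ ⋃ n, A n \ F n := by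
            rintro x ⟨hx1, hx2⟩
            rcases mem_iUnion.1 hx1 with ⟨k, hk⟩
            exact mem_iUnion.2 ⟨k, hk, fun h => hx2 (mem_iUnion.2 ⟨k, h⟩)⟩
          have h1 : μ ((⋃ n, A n) \ ⋃ n, F n) ≤ ε / 2 := by
            calc μ ((⋃ n, A n) \ ⋃ n, F n) ≤ μ (⋃ n, A n \ F n) := measure_mono hsub1
              _ ≤ ∑' n, μ (A n \ F n) := measure_iUnion_le _
              _ ≤ ∑' n, δ n := ENNReal.tsum_le_tsum hFμ
              _ ≤ ε / 2 := hδsum.le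
          -- truncate the union of F n at a finite stage
          set r : ℝ≥0∞ := μ (⋃ n, F n) with hr
          have hrtop : r ≠ ∞ := measure_ne_top μ _
          have hsup : r = ⨆ N, μ (accumulate F N) := measure_iUnion_eq_iSup_accumulate
          obtain ⟨N, hN⟩ : ∃ N, r ≤ μ (accumulate F N) + ε / 2 := by
            rcases eq_or_ne r 0 with hr0 | hr0
            · exact ⟨0, by simp [hr0]⟩
            · have hlt : r - ε / 2 < ⨆ N, μ (accumulate F N) :=
                lt_of_lt_of_le (ENNReal.sub_lt_self hrtop hr0 hε2) hsup.le
              obtain ⟨N, hN⟩ := lt_iSup_iff.1 hlt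
              exact ⟨N, le_trans le_tsub_add (add_le_add_left hN.le _)⟩
          have hAccMeas : MeasurableSet[sigmaGen X] (accumulate F N) := by
            rw [Set.accumulate_def]
            exact MeasurableSet.biUnion (Set.to_countable _) fun n _ => hFmeas n
          have hAccClosed : IsClosed (accumulate F N) := by
            rw [Set.accumulate_def]
            exact (Set.finite_Iic N).isClosed_biUnion fun n _ => hFclosed n
          have hAccSub : accumulate F N ⊆ ⋃ n, F n := by
            rw [← iUnion_accumulate]; exact subset_iUnion _ N
          have h2 : μ ((⋃ n, F n) \ accumulate F N) ≤ ε / 2 := by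
            rw [measure_diff hAccSub hAccMeas.nullMeasurableSet (measure_ne_top μ _)]
            exact tsub_le_iff_left.2 hN
          refine ⟨accumulate F N, hAccMeas, hAccClosed,
            hAccSub.trans (iUnion_mono hFsub), ?_⟩
          have hsub2 : (⋃ n, A n) \ accumulate F N ⊆
              ((⋃ n, A n) \ ⋃ n, F n) ∪ ((⋃ n, F n) \ accumulate F N) := by
            rintro x ⟨hx1, hx2⟩
            by_cases hx3 : x ∈ ⋃ n, F n
            · exact Or.inr ⟨hx3, hx2⟩
            · exact Or.inl ⟨hx1, hx3⟩
          calc μ ((⋃ n, A n) \ accumulate F N)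
              ≤ μ (((⋃ n, A n) \ ⋃ n, F n) ∪ ((⋃ n, F n) \ accumulate F N)) :=
                measure_mono hsub2
            _ ≤ μ ((⋃ n, A n) \ ⋃ n, F n) + μ ((⋃ n, F n) \ accumulate F N) :=
                measure_union_le _ _
            _ ≤ ε / 2 + ε / 2 := add_le_add h1 h2
            _ = ε := ENNReal.add_halves ε
        · -- inner approximation of the complement, which is a countable intersection
          intro ε hε
          obtain ⟨δ, δpos, hδsum⟩ := ENNReal.exists_pos_sum_of_countable' hε ℕ
          choose F hFmeas hFclosed hFsub hFμ using fun n => (hA n).2 (δ n) (δpos n).ne'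
          refine ⟨⋂ n, F n, MeasurableSet.iInter fun n => hFmeas n,
            isClosed_iInter fun n => hFclosed n, ?_, ?_⟩
          · rw [compl_iUnion]
            exact iInter_mono hFsub
          · have hsub : (⋃ n, A n)ᶜ \ ⋂ n, F n ⊆ ⋃ n, (A n)ᶜ \ F n := by
              rintro x ⟨hx1, hx2⟩
              rw [compl_iUnion] at hx1
              rcases mem_iInter.not.1 hx2 with hk
              push_neg at hk
              rcases hk with ⟨k, hk⟩
              exact mem_iUnion.2 ⟨k, mem_iInter.1 hx1 k, hk⟩
            calc μ ((⋃ n, A n)ᶜ \ ⋂ n, F n) ≤ μ (⋃ n, (A n)ᶜ \ F n) := measure_mono hsub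
              _ ≤ ∑' n, μ ((A n)ᶜ \ F n) := measure_iUnion_le _
              _ ≤ ∑' n, δ n := ENNReal.tsum_le_tsum hFμ
              _ ≤ ε := hδsum.le }
  have hle : sigmaGen X ≤ M := by
    rw [sigmaGen]
    refine iSup₂_le fun f hf s hs => ?_
    rcases hs with ⟨t, ht, rfl⟩
    refine ⟨goodSet_preimage X hXcont μ hf ht, ?_⟩
    rw [← preimage_compl]
    exact goodSet_preimage X hXcont μ hf ht.compl
  exact fun A hA => (hle A hA).1

end Aux

/-- Proposition 1.5, first part: every finite measure on the σ-algebra generated by a family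
of continuous real-valued functions on a topological space is closed regular. -/
theorem stmt7 {Ω : Type*} [TopologicalSpace Ω] (X : Set (Ω → ℝ))
    (hXcont : ∀ f ∈ X, Continuous f)
    (μ : @Measure Ω (sigmaGen X)) (hfin : IsFiniteMeasure μ) :
    ∀ A : Set Ω, MeasurableSet[sigmaGen X] A →
      μ A = ⨆ B ∈ {B : Set Ω | MeasurableSet[sigmaGen X] B ∧ IsClosed B ∧ B ⊆ A}, μ B := by
  intro A hA
  refine le_antisymm ?_ (iSup₂_le fun B hB => measure_mono hB.2.2)
  refine ENNReal.le_of_forall_pos_le_add fun ε hε _ => ?_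
  obtain ⟨F, hFmeas, hFclosed, hFsub, hFμ⟩ :=
    goodSet_of_measurable X hXcont μ A hA ε (by exact_mod_cast hε.ne')
  calc μ A = μ (A \ F ∪ F) := by rw [diff_union_of_subset hFsub]
    _ ≤ μ (A \ F) + μ F := measure_union_le _ _
    _ ≤ ε + μ F := add_le_add_left hFμ _
    _ ≤ ε + ⨆ B ∈ {B : Set Ω | MeasurableSet[sigmaGen X] B ∧ IsClosed B ∧ B ⊆ A}, μ B := by
        refine add_le_add_right ?_ _
        exact le_iSup₂_of_le F ⟨hFmeas, hFclosed, hFsub⟩ le_rfl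
    _ = _ + ε := add_comm _ _
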